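/- For every positive integer k there exists a finite simple directed graph G_k on 5k+1 vertices in which every vertex has in-degree at least one, such that the smallest strict majority dynamic monopoly of G_k has exactly 2k vertices; in particular dyn(G_k)/|G_k| = 2k/(5k+1) → 2/5 as k → ∞. -/

import Mathlib

/-!
Basic notions for dynamic monopolies in finite directed graphs.
A directed graph on a vertex type `V` is given by its adjacency relation
`Adj : V → V → Prop`, where `Adj u v` means there is an edge from `u` to `v`.
-/

variable {V : Type*}

/-- The in-degree of a vertex `v`: the number of vertices `u` with an edge from `u` to `v`. -/
noncomputable def inDeg (Adj : V → V → Prop) (v : V) : ℕ :=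
  {u | Adj u v}.ncard

/-- A directed graph is simple: no loops, and no two oppositely directed edges
between the same pair of vertices. -/
def IsSimple (Adj : V → V → Prop) : Prop :=
  Irreflexive Adj ∧ ∀ u v, Adj u v → ¬ Adj v u

/-- A directed graph is strongly connected if any vertex is reachable from any other
by a directed path. -/
def StronglyConnected (Adj : V → V → Prop) : Prop :=
  ∀ u v : V, Relation.ReflTransGen Adj u v

/-- `M` is a dynamic monopoly (dynamo) for `(G, τ)`: the vertex set can be partitioned
into levels `D_0 = M, D_1, …, D_t` (encoded by a level function) such that every vertex
`v` of level `i ≥ 1` receives at least `τ v` edges from vertices of smaller level. -/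
def IsDynamo (Adj : V → V → Prop) (τ : V → ℕ) (M : Set V) : Prop :=
  ∃ level : V → ℕ,
    (∀ v, level v = 0 ↔ v ∈ M) ∧
    ∀ v, 1 ≤ level v → τ v ≤ {u | Adj u v ∧ level u < level v}.ncard

/-- The strict majority threshold `⌈(deg^in(v)+1)/2⌉` (as a natural number,
`(d + 2) / 2 = ⌈(d+1)/2⌉`). -/
noncomputable def strictMajority (Adj : V → V → Prop) (v : V) : ℕ :=
  (inDeg Adj v + 2) / 2

/-- The `f`-value of a vertex `v` with respect to an ordering `σ` of the vertices:
the number of in-neighbours of `v` appearing after `v` minus the number of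
in-neighbours of `v` appearing before `v`. -/
noncomputable def fval [Fintype V] (Adj : V → V → Prop)
    (σ : V ≃ Fin (Fintype.card V)) (v : V) : ℤ :=
  ({u | Adj u v ∧ σ v < σ u}.ncard : ℤ) - ({u | Adj u v ∧ σ u < σ v}.ncard : ℤ)

/-- The adjacency relation of the graph `G_k`. -/
def GA (k : ℕ) (u v : Fin (5 * k + 1)) : Prop :=
  (u.val / 5 = v.val / 5 ∧ v.val < 5 * k ∧
    (v.val % 5 = (u.val % 5 + 1) % 5 ∨ v.val % 5 = (u.val % 5 + 2) % 5))
  ∨ (u.val < 5 * k ∧ u.val % 5 = 0 ∧ v.val = 5 * k)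

lemma GA_inDeg_copy (k : ℕ) (v : Fin (5 * k + 1)) (hv : v.val < 5 * k) :
    inDeg (GA k) v = 2 := by
  have ha : 5 * (v.val / 5) + (v.val % 5 + 3) % 5 < 5 * k + 1 := by omega
  have hb : 5 * (v.val / 5) + (v.val % 5 + 4) % 5 < 5 * k + 1 := by omega
  have hset : {u | GA k u v} = {(⟨_, ha⟩ : Fin (5 * k + 1)), ⟨_, hb⟩} := by
    ext u
    simp only [Set.mem_setOf_eq, Set.mem_insert_iff, Set.mem_singleton_iff, Fin.ext_iff,
      Fin.val_mk]
    have := u.isLt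
    unfold GA
    omega
  rw [inDeg, hset, Set.ncard_pair]
  simp only [ne_eq, Fin.mk.injEq]
  omega

lemma GA_inDeg_x (k : ℕ) (v : Fin (5 * k + 1)) (hv : v.val = 5 * k) :
    inDeg (GA k) v = k := by
  have hset : {u | GA k u v} =
      (fun j : Fin k => (⟨5 * j.val, by omega⟩ : Fin (5 * k + 1))) '' Set.univ := by
    ext u
    simp only [Set.mem_setOf_eq, Set.image_univ, Set.mem_range]
    constructor
    · intro h
      have := u.isLt
      have h' : u.val < 5 * k ∧ u.val % 5 = 0 := by unfold GA at h; omega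
      exact ⟨⟨u.val / 5, by omega⟩, Fin.ext (show 5 * (u.val / 5) = u.val by omega)⟩
    · rintro ⟨j, rfl⟩
      have := j.isLt
      exact Or.inr ⟨show 5 * j.val < 5 * k by omega, show 5 * j.val % 5 = 0 by omega, hv⟩
  rw [inDeg, hset, Set.ncard_image_of_injective _ ?_, Set.ncard_univ,
    Nat.card_eq_fintype_card, Fintype.card_fin]
  intro a b hab
  have h' : 5 * a.val = 5 * b.val := congrArg Fin.val hab
  exact Fin.ext (by omega)

theorem exists_graphs_with_dynamo_ratio_tendsto_two_fifths :
    (∀ k : ℕ, 1 ≤ k →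
      ∃ Adj : Fin (5 * k + 1) → Fin (5 * k + 1) → Prop,
        IsSimple Adj ∧ (∀ v, 1 ≤ inDeg Adj v) ∧
        (∃ M : Set (Fin (5 * k + 1)),
          IsDynamo Adj (strictMajority Adj) M ∧ M.ncard = 2 * k) ∧
        (∀ M : Set (Fin (5 * k + 1)),
          IsDynamo Adj (strictMajority Adj) M → 2 * k ≤ M.ncard)) ∧
    Filter.Tendsto (fun k : ℕ => (2 * k : ℝ) / (5 * k + 1)) Filter.atTop
      (nhds ((2 : ℝ) / 5)) := by
  constructor
  · intro k hk
    refine ⟨GA k, ⟨?_, ?_⟩, ?_, ?_, ?_⟩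
    · -- irreflexive
      intro v h
      unfold GA at h
      omega
    · -- antisymmetric
      intro u v huv hvu
      unfold GA at huv hvu
      omega
    · -- min in-degree ≥ 1
      intro v
      have := v.isLt
      rcases Nat.lt_or_ge v.val (5 * k) with h | h
      · rw [GA_inDeg_copy k v h]; omega
      · rw [GA_inDeg_x k v (by omega)]; omega
    · -- existence of a dynamo of size 2k
      classical
      set level : Fin (5 * k + 1) → ℕ :=
        fun v => if v.val = 5 * k then 4 else v.val % 5 - 1 with hlevel
      set M : Set (Fin (5 * k + 1)) := {v | v.val < 5 * k ∧ v.val % 5 ≤ 1} with hMdef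
      have hlev0 : ∀ v, level v = 0 ↔ v ∈ M := by
        intro v
        have hvlt := v.isLt
        simp only [hlevel, hMdef, Set.mem_setOf_eq]
        by_cases h : v.val = 5 * k
        · rw [if_pos h]
          constructor
          · intro h4
            exact absurd h4 (by norm_num)
          · rintro ⟨h1, _⟩
            omega
        · rw [if_neg h]
          omega
      have hMcard : M.ncard = 2 * k := by
        have himg : M = (fun i : Fin (2 * k) =>
            (⟨5 * (i.val / 2) + i.val % 2, by omega⟩ : Fin (5 * k + 1))) '' Set.univ := by
          ext v
          simp only [hMdef, Set.mem_setOf_eq, Set.image_univ, Set.mem_range]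
          constructor
          · rintro ⟨h1, h2⟩
            exact ⟨⟨2 * (v.val / 5) + v.val % 5, by omega⟩,
              Fin.ext (show 5 * ((2 * (v.val / 5) + v.val % 5) / 2) +
                (2 * (v.val / 5) + v.val % 5) % 2 = v.val by omega)⟩
          · rintro ⟨i, rfl⟩
            have := i.isLt
            exact ⟨show 5 * (i.val / 2) + i.val % 2 < 5 * k by omega,
              show (5 * (i.val / 2) + i.val % 2) % 5 ≤ 1 by omega⟩
        rw [himg, Set.ncard_image_of_injective _ ?_, Set.ncard_univ,
          Nat.card_eq_fintype_card, Fintype.card_fin]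
        intro a b hab
        have h' : 5 * (a.val / 2) + a.val % 2 = 5 * (b.val / 2) + b.val % 2 :=
          congrArg Fin.val hab
        have := a.isLt
        have := b.isLt
        exact Fin.ext (by omega)
      refine ⟨M, ⟨level, hlev0, ?_⟩, hMcard⟩
      intro v hv
      have hvlt := v.isLt
      by_cases hx : v.val = 5 * k
      · -- vertex x
        have hall : {u | GA k u v ∧ level u < level v} = {u | GA k u v} := by
          ext u
          simp only [Set.mem_setOf_eq, and_iff_left_iff_imp]
          intro hA
          have hu : u.val < 5 * k ∧ u.val % 5 = 0 := by unfold GA at hA; omega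
          simp only [hlevel]
          rw [if_neg (by omega), if_pos hx]
          omega
        rw [hall]
        show strictMajority (GA k) v ≤ inDeg (GA k) v
        rw [strictMajority, GA_inDeg_x k v hx]
        omega
      · -- copy vertex
        have hvlt' : v.val < 5 * k := by omega
        have hvm : 2 ≤ v.val % 5 := by
          simp only [hlevel] at hv
          rw [if_neg hx] at hv
          omega
        have hall : {u | GA k u v ∧ level u < level v} = {u | GA k u v} := by
          ext u
          simp only [Set.mem_setOf_eq, and_iff_left_iff_imp]
          intro hA
          have hu : u.val / 5 = v.val / 5 ∧
              (v.val % 5 = (u.val % 5 + 1) % 5 ∨ v.val % 5 = (u.val % 5 + 2) % 5) := by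
            unfold GA at hA; omega
          have hult : u.val < 5 * k := by omega
          simp only [hlevel]
          rw [if_neg (by omega), if_neg hx]
          omega
        rw [hall]
        show strictMajority (GA k) v ≤ inDeg (GA k) v
        rw [strictMajority, GA_inDeg_copy k v hvlt']
    · -- lower bound: every dynamo has at least 2k vertices
      classical
      rintro M ⟨level, h0, h1⟩
      have key : ∀ j < k, ∃ a b : Fin (5 * k + 1), a ≠ b ∧ a ∈ M ∧ b ∈ M ∧
          a.val < 5 * k ∧ a.val / 5 = j ∧ b.val < 5 * k ∧ b.val / 5 = j := by
        intro j hj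
        by_cases hall : ∀ u : Fin (5 * k + 1), u.val < 5 * k → u.val / 5 = j → level u = 0
        · refine ⟨⟨5 * j, by omega⟩, ⟨5 * j + 1, by omega⟩, ?_, ?_, ?_,
            show 5 * j < 5 * k by omega, show 5 * j / 5 = j by omega,
            show 5 * j + 1 < 5 * k by omega, show (5 * j + 1) / 5 = j by omega⟩
          · simp only [ne_eq, Fin.mk.injEq]
            omega
          · exact (h0 _).1 (hall ⟨5 * j, by omega⟩ (show 5 * j < 5 * k by omega)
              (show 5 * j / 5 = j by omega))
          · exact (h0 _).1 (hall ⟨5 * j + 1, by omega⟩ (show 5 * j + 1 < 5 * k by omega)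
              (show (5 * j + 1) / 5 = j by omega))
        · push_neg at hall
          obtain ⟨u0, hu1, hu2, hu3⟩ := hall
          set T : Finset (Fin (5 * k + 1)) :=
            Finset.univ.filter (fun u => u.val < 5 * k ∧ u.val / 5 = j ∧ 1 ≤ level u) with hT
          have hTne : T.Nonempty := by
            refine ⟨u0, ?_⟩
            simp only [hT, Finset.mem_filter, Finset.mem_univ, true_and]
            exact ⟨hu1, hu2, by omega⟩
          obtain ⟨v, hvT, hvmin⟩ := T.exists_min_image level hTne
          simp only [hT, Finset.mem_filter, Finset.mem_univ, true_and] at hvT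
          obtain ⟨hv1, hv2, hv3⟩ := hvT
          have hthr : strictMajority (GA k) v = 2 := by
            rw [strictMajority, GA_inDeg_copy k v hv1]
          have h2 := h1 v hv3
          rw [hthr] at h2
          have hfinS : {u | GA k u v ∧ level u < level v}.Finite := Set.toFinite _
          obtain ⟨a, b, ha, hb, hab⟩ := (Set.one_lt_ncard_iff hfinS).1 (by omega)
          simp only [Set.mem_setOf_eq] at ha hb
          have hmem : ∀ w : Fin (5 * k + 1), GA k w v → level w < level v →
              w ∈ M ∧ w.val < 5 * k ∧ w.val / 5 = j := by
            intro w hA hlt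
            have hw : w.val < 5 * k ∧ w.val / 5 = j := by
              have := w.isLt
              unfold GA at hA
              omega
            have hw0 : level w = 0 := by
              by_contra hne
              have hwT : w ∈ T := by
                simp only [hT, Finset.mem_filter, Finset.mem_univ, true_and]
                exact ⟨hw.1, hw.2, by omega⟩
              exact absurd (hvmin w hwT) (by omega)
            exact ⟨(h0 w).1 hw0, hw.1, hw.2⟩
          obtain ⟨haM, ha1, ha2⟩ := hmem a ha.1 ha.2
          obtain ⟨hbM, hb1, hb2⟩ := hmem b hb.1 hb.2
          exact ⟨a, b, hab, haM, hbM, ha1, ha2, hb1, hb2⟩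
      -- counting
      have hfin : M.Finite := Set.toFinite M
      rw [Set.ncard_eq_toFinset_card M hfin]
      set F := hfin.toFinset with hF
      set G := F.filter (fun v => v.val < 5 * k) with hG
      have hGF : G.card ≤ F.card := Finset.card_filter_le _ _
      have hfib : G.card = ∑ j ∈ Finset.range k, (G.filter (fun v => v.val / 5 = j)).card := by
        apply Finset.card_eq_sum_card_fiberwise
        intro v hv
        simp only [Finset.mem_coe, hG, Finset.mem_filter] at hv
        simp only [Finset.mem_coe, Finset.mem_range]
        omega
      have hfiber : ∀ j ∈ Finset.range k, 2 ≤ (G.filter (fun v => v.val / 5 = j)).card := by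
        intro j hj
        rw [Finset.mem_range] at hj
        obtain ⟨a, b, hab, haM, hbM, ha1, ha2, hb1, hb2⟩ := key j hj
        have hamem : a ∈ G.filter (fun v => v.val / 5 = j) := by
          simp only [hG, hF, Finset.mem_filter, Set.Finite.mem_toFinset]
          exact ⟨⟨haM, ha1⟩, ha2⟩
        have hbmem : b ∈ G.filter (fun v => v.val / 5 = j) := by
          simp only [hG, hF, Finset.mem_filter, Set.Finite.mem_toFinset]
          exact ⟨⟨hbM, hb1⟩, hb2⟩
        exact Finset.one_lt_card.2 ⟨a, hamem, b, hbmem, hab⟩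
      calc 2 * k = ∑ _j ∈ Finset.range k, 2 := by
            rw [Finset.sum_const, Finset.card_range, smul_eq_mul, Nat.mul_comm]
        _ ≤ ∑ j ∈ Finset.range k, (G.filter (fun v => v.val / 5 = j)).card :=
            Finset.sum_le_sum hfiber
        _ = G.card := hfib.symm
        _ ≤ F.card := hGF
  · -- the limit
    have h1 : Filter.Tendsto (fun k : ℕ => ((k : ℝ))⁻¹) Filter.atTop (nhds 0) :=
      tendsto_inv_atTop_zero.comp tendsto_natCast_atTop_atTop
    have h2 : Filter.Tendsto (fun k : ℕ => (2 : ℝ) / (5 + (k : ℝ)⁻¹)) Filter.atTop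
        (nhds ((2 : ℝ) / 5)) := by
      have h3 := (tendsto_const_nhds (x := (5 : ℝ)) (f := Filter.atTop (α := ℕ))).add h1
      rw [add_zero] at h3
      exact (tendsto_const_nhds (x := (2 : ℝ))).div h3 (by norm_num)
    refine Filter.Tendsto.congr' ?_ h2
    filter_upwards [Filter.eventually_ge_atTop 1] with k hk
    have hk' : (0 : ℝ) < k := by positivity
    field_simp
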